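/- Let ω > 0 with ω² > 1/16, and let (r, v) : ℝ_{≥0} → ℝ² solve r' = -(ω² v + r/2), v' = r, with (r(0), v(0)) ≠ (0,0). Then liminf_{τ→∞} (∫_0^τ r(s)² ds) / (∫_0^τ v(s)² ds) > 0. -/

import Mathlib

open Filter MeasureTheory intervalIntegral

/-- If `f` vanishes on `[0,∞)` and has derivative `d t` at every `t ≥ 0`, then `d t = 0`
for `t > 0`. -/
lemma aux_deriv_zero (f d : ℝ → ℝ) (hf : ∀ t : ℝ, 0 ≤ t → f t = 0)
    (hd : ∀ t : ℝ, 0 ≤ t → HasDerivAt f (d t) t) : ∀ t : ℝ, 0 < t → d t = 0 := by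
  intro t ht
  have h1 : f =ᶠ[nhds t] fun _ => 0 := by
    filter_upwards [Ioi_mem_nhds ht] with s hs using hf s (le_of_lt hs)
  have h2 : HasDerivAt f 0 t := (hasDerivAt_const t (0:ℝ)).congr_of_eventuallyEq h1
  exact (hd t ht.le).unique h2

/-- If `f` is continuous at `0` and vanishes on `(0,∞)`, then `f 0 = 0`. -/
lemma aux_zero_at_zero (f : ℝ → ℝ) (hf : ContinuousAt f 0)
    (h : ∀ t : ℝ, 0 < t → f t = 0) : f 0 = 0 := by
  have h1 : Tendsto f (nhdsWithin 0 (Set.Ioi 0)) (nhds (f 0)) :=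
    (hf.continuousWithinAt (s := Set.Ioi 0)).tendsto
  have h2 : Tendsto f (nhdsWithin 0 (Set.Ioi 0)) (nhds 0) := by
    have he : f =ᶠ[nhdsWithin (0:ℝ) (Set.Ioi 0)] fun _ => 0 :=
      eventually_nhdsWithin_of_forall fun x hx => h x hx
    exact Tendsto.congr' he.symm tendsto_const_nhds
  exact tendsto_nhds_unique h1 h2

/-- A continuous-on-`[0,∞)` function nonzero somewhere on `[0,∞)` has a positive
integral of its square on some `[0,T]`. -/
lemma aux_pos_integral (f : ℝ → ℝ) (hfc : ∀ t : ℝ, 0 ≤ t → ContinuousAt f t)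
    (t₀ : ℝ) (ht₀ : 0 ≤ t₀) (hft₀ : f t₀ ≠ 0) :
    ∃ T : ℝ, 0 ≤ T ∧ 0 < ∫ s in (0:ℝ)..T, f s ^ 2 := by
  have hc2 : ContinuousAt (fun s => f s ^ 2) t₀ := (hfc t₀ ht₀).pow 2
  have hpos : 0 < f t₀ ^ 2 := by positivity
  obtain ⟨δ, hδ, hδ'⟩ := Metric.continuousAt_iff.mp hc2 (f t₀ ^ 2 / 2) (by linarith)
  set c : ℝ := f t₀ ^ 2 / 2 with hc
  have hlow : ∀ s ∈ Set.Icc t₀ (t₀ + δ / 2), c ≤ f s ^ 2 := by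
    intro s hs
    have : dist s t₀ < δ := by
      rw [Real.dist_eq, abs_of_nonneg (by linarith [hs.1])]
      linarith [hs.2]
    have := hδ' this
    rw [Real.dist_eq, abs_lt] at this
    linarith [this.1]
  refine ⟨t₀ + δ / 2, by linarith, ?_⟩
  have hcont : ∀ a b : ℝ, 0 ≤ a → ContinuousOn (fun s => f s ^ 2) (Set.uIcc a b) → True := fun _ _ _ _ => trivial
  have hco : ContinuousOn (fun s => f s ^ 2) (Set.Icc 0 (t₀ + δ / 2)) := by
    intro s hs
    exact ((hfc s hs.1).pow 2).continuousWithinAt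
  have hi1 : IntervalIntegrable (fun s => f s ^ 2) volume 0 t₀ := by
    apply ContinuousOn.intervalIntegrable
    apply hco.mono
    rw [Set.uIcc_of_le ht₀]
    exact Set.Icc_subset_Icc le_rfl (by linarith)
  have hi2 : IntervalIntegrable (fun s => f s ^ 2) volume t₀ (t₀ + δ / 2) := by
    apply ContinuousOn.intervalIntegrable
    apply hco.mono
    rw [Set.uIcc_of_le (by linarith)]
    exact Set.Icc_subset_Icc ht₀ le_rfl
  rw [← integral_add_adjacent_intervals hi1 hi2]
  have h1 : 0 ≤ ∫ s in (0:ℝ)..t₀, f s ^ 2 :=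
    integral_nonneg ht₀ fun s _ => by positivity
  have h2 : c * (δ / 2) ≤ ∫ s in t₀..(t₀ + δ / 2), f s ^ 2 := by
    have := integral_mono_on (by linarith : t₀ ≤ t₀ + δ/2)
      (_root_.intervalIntegrable_const (c := c)) hi2 hlow
    rw [intervalIntegral.integral_const] at this
    simpa [smul_eq_mul, mul_comm] using this
  have : 0 < c * (δ / 2) := by positivity
  linarith

/-- Monotonicity of `τ ↦ ∫₀^τ f²`. -/
lemma aux_mono (f : ℝ → ℝ) (hfc : ∀ t : ℝ, 0 ≤ t → ContinuousAt f t)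
    (a b : ℝ) (ha : 0 ≤ a) (hab : a ≤ b) :
    (∫ s in (0:ℝ)..a, f s ^ 2) ≤ ∫ s in (0:ℝ)..b, f s ^ 2 := by
  have hi1 : IntervalIntegrable (fun s => f s ^ 2) volume 0 a := by
    apply ContinuousOn.intervalIntegrable
    intro s hs
    rw [Set.uIcc_of_le ha] at hs
    exact ((hfc s hs.1).pow 2).continuousWithinAt
  have hi2 : IntervalIntegrable (fun s => f s ^ 2) volume a b := by
    apply ContinuousOn.intervalIntegrable
    intro s hs
    rw [Set.uIcc_of_le hab] at hs
    exact ((hfc s (le_trans ha hs.1)).pow 2).continuousWithinAt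
  rw [← integral_add_adjacent_intervals hi1 hi2]
  have : 0 ≤ ∫ s in a..b, f s ^ 2 := integral_nonneg hab fun s _ => by positivity
  linarith


/-- STATEMENT 3: Lefevere–Schenkel limiting mode, complex-eigenvalue case `ω² > 1/16`:
the time-averaged ratio of `r²` over `v²` has positive liminf. -/
theorem stmt4 (ω : ℝ) (hω : 0 < ω) (hω2 : ω ^ 2 > 1 / 16)
    (r v : ℝ → ℝ)
    (hr : ∀ t, 0 ≤ t → HasDerivAt r (-(ω ^ 2 * v t + r t / 2)) t)
    (hv : ∀ t, 0 ≤ t → HasDerivAt v (r t) t)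
    (h0 : ¬(r 0 = 0 ∧ v 0 = 0)) :
    0 < Filter.liminf
      (fun τ : ℝ => (∫ s in (0:ℝ)..τ, (r s) ^ 2) / (∫ s in (0:ℝ)..τ, (v s) ^ 2))
      Filter.atTop := by
  have hω2pos : (0:ℝ) < ω ^ 2 := by positivity
  have hrc : ∀ t : ℝ, 0 ≤ t → ContinuousAt r t := fun t ht => (hr t ht).continuousAt
  have hvc : ∀ t : ℝ, 0 ≤ t → ContinuousAt v t := fun t ht => (hv t ht).continuousAt
  -- derivatives of energy and cross term
  have hE' : ∀ t : ℝ, 0 ≤ t →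
      HasDerivAt (fun t => r t ^ 2 + ω ^ 2 * v t ^ 2) (-(r t ^ 2)) t := by
    intro t ht
    have h1 := ((hr t ht).fun_pow 2).fun_add (((hv t ht).fun_pow 2).const_mul (ω ^ 2))
    refine h1.congr_deriv ?_
    ring
  have hG' : ∀ t : ℝ, 0 ≤ t →
      HasDerivAt (fun t => r t * v t + v t ^ 2 / 4) (r t ^ 2 - ω ^ 2 * v t ^ 2) t := by
    intro t ht
    have h1 := (((hr t ht).fun_mul (hv t ht)).fun_add (((hv t ht).fun_pow 2).div_const 4))
    refine h1.congr_deriv ?_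
    ring
  -- integrability
  have hri : ∀ τ : ℝ, 0 ≤ τ → IntervalIntegrable (fun s => r s ^ 2) volume 0 τ := by
    intro τ hτ
    apply ContinuousOn.intervalIntegrable
    intro s hs
    rw [Set.uIcc_of_le hτ] at hs
    exact ((hrc s hs.1).pow 2).continuousWithinAt
  have hvi : ∀ τ : ℝ, 0 ≤ τ → IntervalIntegrable (fun s => v s ^ 2) volume 0 τ := by
    intro τ hτ
    apply ContinuousOn.intervalIntegrable
    intro s hs
    rw [Set.uIcc_of_le hτ] at hs
    exact ((hvc s hs.1).pow 2).continuousWithinAt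
  -- FTC identities
  have key1 : ∀ τ : ℝ, 0 ≤ τ → (∫ s in (0:ℝ)..τ, r s ^ 2) =
      (r 0 ^ 2 + ω ^ 2 * v 0 ^ 2) - (r τ ^ 2 + ω ^ 2 * v τ ^ 2) := by
    intro τ hτ
    have hftc : (∫ s in (0:ℝ)..τ, -(r s ^ 2)) =
        (r τ ^ 2 + ω ^ 2 * v τ ^ 2) - (r 0 ^ 2 + ω ^ 2 * v 0 ^ 2) := by
      apply integral_eq_sub_of_hasDerivAt
      · intro x hx
        rw [Set.uIcc_of_le hτ] at hx
        exact hE' x hx.1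
      · exact (hri τ hτ).neg
    rw [intervalIntegral.integral_neg] at hftc
    linarith
  have key2 : ∀ τ : ℝ, 0 ≤ τ →
      (∫ s in (0:ℝ)..τ, r s ^ 2) - ω ^ 2 * ∫ s in (0:ℝ)..τ, v s ^ 2 =
      (r τ * v τ + v τ ^ 2 / 4) - (r 0 * v 0 + v 0 ^ 2 / 4) := by
    intro τ hτ
    have hftc : (∫ s in (0:ℝ)..τ, (r s ^ 2 - ω ^ 2 * v s ^ 2)) =
        (r τ * v τ + v τ ^ 2 / 4) - (r 0 * v 0 + v 0 ^ 2 / 4) := by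
      apply integral_eq_sub_of_hasDerivAt
      · intro x hx
        rw [Set.uIcc_of_le hτ] at hx
        exact hG' x hx.1
      · exact (hri τ hτ).sub (((hvi τ hτ)).const_mul (ω ^ 2))
    rw [intervalIntegral.integral_sub (hri τ hτ) ((hvi τ hτ).const_mul (ω ^ 2)),
      intervalIntegral.integral_const_mul] at hftc
    linarith
  obtain ⟨E0, hE0def⟩ : ∃ E0 : ℝ, E0 = r 0 ^ 2 + ω ^ 2 * v 0 ^ 2 := ⟨_, rfl⟩
  rw [← hE0def] at key1
  have hE0nn : 0 ≤ E0 := by rw [hE0def]; positivity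
  -- energy decreases
  have hEle : ∀ τ : ℝ, 0 ≤ τ → r τ ^ 2 + ω ^ 2 * v τ ^ 2 ≤ E0 := by
    intro τ hτ
    have h1 : 0 ≤ ∫ s in (0:ℝ)..τ, r s ^ 2 :=
      intervalIntegral.integral_nonneg hτ fun s _ => by positivity
    have h2 := key1 τ hτ
    linarith
  -- the upper bound for ∫ v²
  obtain ⟨C, hCdef⟩ : ∃ C : ℝ,
      C = (E0 + (E0 / 2 + E0 / (2 * ω ^ 2)) + |r 0 * v 0 + v 0 ^ 2 / 4|) / ω ^ 2 + 1 :=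
    ⟨_, rfl⟩
  have hCpos : 0 < C := by
    have h2 : (0:ℝ) ≤ |r 0 * v 0 + v 0 ^ 2 / 4| := abs_nonneg _
    have h3 : 0 ≤ (E0 + (E0 / 2 + E0 / (2 * ω ^ 2)) + |r 0 * v 0 + v 0 ^ 2 / 4|) / ω ^ 2 := by
      positivity
    linarith
  have hvbound : ∀ τ : ℝ, 0 ≤ τ → (∫ s in (0:ℝ)..τ, v s ^ 2) ≤ C := by
    intro τ hτ
    have hid : ω ^ 2 * (∫ s in (0:ℝ)..τ, v s ^ 2) =
        (E0 - (r τ ^ 2 + ω ^ 2 * v τ ^ 2)) - (r τ * v τ + v τ ^ 2 / 4)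
          + (r 0 * v 0 + v 0 ^ 2 / 4) := by
      have h1 := key2 τ hτ
      have h2 := key1 τ hτ
      linarith
    have hEτle := hEle τ hτ
    have ha2 : r τ ^ 2 ≤ E0 := by nlinarith [sq_nonneg (v τ)]
    have hb2 : v τ ^ 2 ≤ E0 / ω ^ 2 := by
      rw [le_div_iff₀ hω2pos]
      nlinarith [sq_nonneg (r τ)]
    have hab : -(r τ * v τ) ≤ (r τ ^ 2 + v τ ^ 2) / 2 := by
      nlinarith [sq_nonneg (r τ + v τ)]
    have hGlow : -(r τ * v τ + v τ ^ 2 / 4) ≤ E0 / 2 + E0 / (2 * ω ^ 2) := by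
      have hv4 : 0 ≤ v τ ^ 2 / 4 := by positivity
      have hEone : E0 / (2 * ω ^ 2) = (E0 / ω ^ 2) / 2 := by ring
      rw [hEone]
      linarith
    have hG0 : r 0 * v 0 + v 0 ^ 2 / 4 ≤ |r 0 * v 0 + v 0 ^ 2 / 4| := le_abs_self _
    have hEτ : 0 ≤ r τ ^ 2 + ω ^ 2 * v τ ^ 2 := by positivity
    have h2 : ω ^ 2 * (∫ s in (0:ℝ)..τ, v s ^ 2) ≤
        E0 + (E0 / 2 + E0 / (2 * ω ^ 2)) + |r 0 * v 0 + v 0 ^ 2 / 4| := by linarith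
    have h3 := (le_div_iff₀' hω2pos).mpr h2
    linarith
  -- positivity of ∫ r² for some T
  have hTr : ∃ T : ℝ, 0 ≤ T ∧ 0 < ∫ s in (0:ℝ)..T, r s ^ 2 := by
    by_cases hcase : ∃ t₀ : ℝ, 0 ≤ t₀ ∧ r t₀ ≠ 0
    · obtain ⟨t₀, ht₀, hne⟩ := hcase
      exact aux_pos_integral r hrc t₀ ht₀ hne
    · exfalso
      push_neg at hcase
      have hrz : ∀ t : ℝ, 0 ≤ t → r t = 0 := hcase
      have hdz := aux_deriv_zero r (fun t => -(ω ^ 2 * v t + r t / 2)) hrz hr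
      have hvz : ∀ t : ℝ, 0 < t → v t = 0 := by
        intro t ht
        have h1 : -(ω ^ 2 * v t + r t / 2) = 0 := hdz t ht
        have h2 := hrz t ht.le
        rw [h2] at h1
        have : ω ^ 2 * v t = 0 := by linarith
        exact (mul_eq_zero.mp this).resolve_left (ne_of_gt hω2pos)
      have hv0 : v 0 = 0 := aux_zero_at_zero v (hvc 0 le_rfl) hvz
      exact h0 ⟨hrz 0 le_rfl, hv0⟩
  -- positivity of ∫ v² for some T'
  have hTv : ∃ T : ℝ, 0 ≤ T ∧ 0 < ∫ s in (0:ℝ)..T, v s ^ 2 := by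
    by_cases hcase : ∃ t₀ : ℝ, 0 ≤ t₀ ∧ v t₀ ≠ 0
    · obtain ⟨t₀, ht₀, hne⟩ := hcase
      exact aux_pos_integral v hvc t₀ ht₀ hne
    · exfalso
      push_neg at hcase
      have hvz : ∀ t : ℝ, 0 ≤ t → v t = 0 := hcase
      have hdz := aux_deriv_zero v r hvz hv
      have hr0 : r 0 = 0 := aux_zero_at_zero r (hrc 0 le_rfl) hdz
      exact h0 ⟨hr0, hvz 0 le_rfl⟩
  obtain ⟨T, hT, hTpos⟩ := hTr
  obtain ⟨T', hT', hT'pos⟩ := hTv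
  -- eventual two-sided bounds on the ratio
  have hlb : ∀ᶠ τ in (atTop : Filter ℝ),
      (∫ s in (0:ℝ)..T, r s ^ 2) / C ≤ (∫ s in (0:ℝ)..τ, r s ^ 2) / (∫ s in (0:ℝ)..τ, v s ^ 2) := by
    filter_upwards [eventually_ge_atTop (max T T')] with τ hτ
    have hτT : T ≤ τ := le_trans (le_max_left _ _) hτ
    have hτT' : T' ≤ τ := le_trans (le_max_right _ _) hτ
    have hτ0 : 0 ≤ τ := le_trans hT hτT
    have h1 : (∫ s in (0:ℝ)..T, r s ^ 2) ≤ ∫ s in (0:ℝ)..τ, r s ^ 2 := aux_mono r hrc T τ hT hτT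
    have h2 : (∫ s in (0:ℝ)..T', v s ^ 2) ≤ ∫ s in (0:ℝ)..τ, v s ^ 2 := aux_mono v hvc T' τ hT' hτT'
    have h3 : (∫ s in (0:ℝ)..τ, v s ^ 2) ≤ C := hvbound τ hτ0
    have h4 : 0 < ∫ s in (0:ℝ)..τ, v s ^ 2 := lt_of_lt_of_le hT'pos h2
    exact div_le_div₀ (le_trans hTpos.le h1) h1 h4 h3
  have hub : ∀ᶠ τ in (atTop : Filter ℝ),
      (∫ s in (0:ℝ)..τ, r s ^ 2) / (∫ s in (0:ℝ)..τ, v s ^ 2) ≤ (E0 + 1) / ∫ s in (0:ℝ)..T', v s ^ 2 := by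
    filter_upwards [eventually_ge_atTop (max T T')] with τ hτ
    have hτT' : T' ≤ τ := le_trans (le_max_right _ _) hτ
    have hτ0 : 0 ≤ τ := le_trans hT' hτT'
    have h2 : (∫ s in (0:ℝ)..T', v s ^ 2) ≤ ∫ s in (0:ℝ)..τ, v s ^ 2 := aux_mono v hvc T' τ hT' hτT'
    have h5 : (∫ s in (0:ℝ)..τ, r s ^ 2) ≤ E0 + 1 := by
      have := key1 τ hτ0
      have hEτ : 0 ≤ r τ ^ 2 + ω ^ 2 * v τ ^ 2 := by positivity
      linarith
    exact div_le_div₀ (by linarith [hE0nn]) h5 hT'pos h2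
  have hcob : IsCoboundedUnder (· ≥ ·) (atTop : Filter ℝ)
      (fun τ : ℝ => (∫ s in (0:ℝ)..τ, r s ^ 2) / (∫ s in (0:ℝ)..τ, v s ^ 2)) :=
    isCoboundedUnder_ge_of_eventually_le _ hub
  exact lt_of_lt_of_le (div_pos hTpos hCpos) (le_liminf_of_le hcob hlb)
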